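/- (No spurious local minimizers for the PCA energy.) Let x_1, ..., x_N ∈ ℝ^D and consider the PCA energy f(L) = ∑_{i=1}^N ‖Q_L x_i‖² on the set of d-dimensional linear subspaces of ℝ^D, metrized by the distance dist(L, L') = ‖P_L − P_{L'}‖ between their orthogonal projection matrices. Then every local minimizer of f is a global minimizer: if a d-dimensional subspace L satisfies f(L) ≤ f(L') for all d-dimensional subspaces L' in some neighborhood of L, then f(L) ≤ f(L') for all d-dimensional subspaces L' of ℝ^D. -/

import Mathlib

open Finset Submodule Module

noncomputable section PCAAux

variable {E : Type*} [NormedAddCommGroup E] [InnerProductSpace ℝ E] [FiniteDimensional ℝ E]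

local notation "⟪" a ", " b "⟫" => @inner ℝ _ _ a b

variable {N : ℕ} (x : Fin N → E)

/-- The PCA quadratic form. -/
def pcaQ (w : E) : ℝ := ∑ i, ⟪x i, w⟫ ^ 2

/-- The PCA bilinear form. -/
def pcaB (u v : E) : ℝ := ∑ i, ⟪x i, u⟫ * ⟪x i, v⟫

lemma pcaQ_nonneg (w : E) : 0 ≤ pcaQ x w :=
  Finset.sum_nonneg fun i _ => sq_nonneg _

lemma pcaQ_smul (a : ℝ) (w : E) : pcaQ x (a • w) = a ^ 2 * pcaQ x w := by
  simp [pcaQ, real_inner_smul_right, mul_pow, Finset.mul_sum]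

lemma pcaB_smul (a b : ℝ) (u v : E) :
    pcaB x (a • u) (b • v) = a * b * pcaB x u v := by
  simp only [pcaB, real_inner_smul_right, Finset.mul_sum]
  exact Finset.sum_congr rfl fun i _ => by ring

lemma pcaQ_add (u v : E) :
    pcaQ x (u + v) = pcaQ x u + 2 * pcaB x u v + pcaQ x v := by
  simp only [pcaQ, pcaB, inner_add_right, Finset.mul_sum, ← Finset.sum_add_distrib]
  exact Finset.sum_congr rfl fun i _ => by ring

lemma pcaQ_combo (a b : ℝ) (u v : E) :
    pcaQ x (a • u + b • v)
      = a ^ 2 * pcaQ x u + 2 * (a * b) * pcaB x u v + b ^ 2 * pcaQ x v := by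
  rw [pcaQ_add, pcaQ_smul, pcaQ_smul, pcaB_smul]; ring

/-- Projection onto the span of an orthonormal family. -/
lemma orthProj_span_orthonormal {n : ℕ} {c : Fin n → E} (hc : Orthonormal ℝ c) (y : E) :
    (orthogonalProjection (span ℝ (Set.range c)) y : E) = ∑ j, ⟪c j, y⟫ • c j := by
  apply eq_starProjection_of_mem_orthogonal (K := span ℝ (Set.range c))
  · exact Submodule.sum_mem _ fun j _ => Submodule.smul_mem _ _ (subset_span ⟨j, rfl⟩)
  · rw [Submodule.mem_orthogonal]
    intro u hu
    induction hu using Submodule.span_induction with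
    | mem w hw =>
      obtain ⟨k, rfl⟩ := hw
      rw [inner_sub_right, inner_sum]
      simp only [real_inner_smul_right]
      rw [Finset.sum_eq_single k]
      · rw [real_inner_self_eq_norm_sq, hc.1 k]
        ring
      · intro j _ hjk
        rw [hc.2 hjk.symm, mul_zero]
      · intro h; exact absurd (Finset.mem_univ k) h
    | zero => simp
    | add a b _ _ ha hb => rw [inner_add_left, ha, hb, add_zero]
    | smul a w _ hw => rw [real_inner_smul_left, hw, mul_zero]


lemma normSq_proj_span {n : ℕ} {c : Fin n → E} (hc : Orthonormal ℝ c) (y : E) :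
    ‖(orthogonalProjection (span ℝ (Set.range c)) y : E)‖ ^ 2 = ∑ j, ⟪c j, y⟫ ^ 2 := by
  rw [orthProj_span_orthonormal hc, ← real_inner_self_eq_norm_sq, inner_sum]
  refine Finset.sum_congr rfl fun j _ => ?_
  rw [real_inner_smul_right, hc.inner_left_fintype (fun j => ⟪c j, y⟫) j]
  simp [sq]

/-- The PCA energy of the span of an orthonormal family. -/
lemma sum_normSq_proj_span {n : ℕ} {c : Fin n → E} (hc : Orthonormal ℝ c) :
    ∑ i, ‖(orthogonalProjection (span ℝ (Set.range c)) (x i) : E)‖ ^ 2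
      = ∑ j, pcaQ x (c j) := by
  simp only [normSq_proj_span hc, pcaQ]
  rw [Finset.sum_comm]
  exact Finset.sum_congr rfl fun j _ => Finset.sum_congr rfl fun i _ => by
    rw [real_inner_comm]

/-- Parseval for an orthonormal basis. -/
lemma parseval {ι : Type*} [Fintype ι] (b : OrthonormalBasis ι ℝ E) (y : E) :
    ∑ m, ⟪y, b m⟫ ^ 2 = ‖y‖ ^ 2 := by
  rw [← real_inner_self_eq_norm_sq, ← b.sum_inner_mul_inner y y]
  exact Finset.sum_congr rfl fun m _ => by rw [sq, real_inner_comm (b m) y]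


lemma onb_coe_orthonormal {L : Submodule ℝ E} {d : ℕ} (b : OrthonormalBasis (Fin d) ℝ L) :
    Orthonormal ℝ (fun j => (b j : E)) := by
  rw [orthonormal_iff_ite]
  intro i j
  have := orthonormal_iff_ite.mp b.orthonormal i j
  rwa [Submodule.coe_inner] at this

lemma onb_coe_span {L : Submodule ℝ E} {d : ℕ} (b : OrthonormalBasis (Fin d) ℝ L) :
    span ℝ (Set.range (fun j => (b j : E))) = L := by
  have h1 : Set.range (fun j => (b j : E)) = L.subtype '' Set.range b := by
    rw [← Set.range_comp]; rfl
  rw [h1, ← Submodule.map_span, ← OrthonormalBasis.coe_toBasis b, b.toBasis.span_eq,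
    Submodule.map_top, Submodule.range_subtype]

lemma exists_orthonormal_span (L : Submodule ℝ E) {d : ℕ} (hL : finrank ℝ L = d) :
    ∃ e : Fin d → E, Orthonormal ℝ e ∧ span ℝ (Set.range e) = L ∧ ∀ j, e j ∈ L := by
  let b := (stdOrthonormalBasis ℝ L).reindex (finCongr hL)
  exact ⟨fun j => (b j : E), onb_coe_orthonormal b, onb_coe_span b, fun j => (b j).2⟩

lemma exists_orthonormal_span_head (L : Submodule ℝ E) {d : ℕ} (hL : finrank ℝ L = d)
    {u : E} (huL : u ∈ L) (hu : ‖u‖ = 1) (i0 : Fin d) :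
    ∃ e : Fin d → E, Orthonormal ℝ e ∧ span ℝ (Set.range e) = L ∧ (∀ j, e j ∈ L)
      ∧ e i0 = u := by
  have hcard : finrank ℝ L = Fintype.card (Fin d) := by simpa using hL
  have horth : Orthonormal ℝ (({i0} : Set (Fin d)).restrict (fun _ => (⟨u, huL⟩ : L))) := by
    rw [orthonormal_iff_ite]
    intro i j
    have hij : i = j := Subtype.ext (by
      have h1 := i.2; have h2 := j.2
      simp only [Set.mem_singleton_iff] at h1 h2
      rw [h1, h2])
    rw [if_pos hij, hij]
    show ⟪(⟨u, huL⟩ : L), (⟨u, huL⟩ : L)⟫ = 1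
    rw [real_inner_self_eq_norm_sq]
    have h : ‖(⟨u, huL⟩ : L)‖ = 1 := hu
    rw [h]; norm_num
  obtain ⟨b, hb⟩ := horth.exists_orthonormalBasis_extension_of_card_eq hcard
  refine ⟨fun j => (b j : E), onb_coe_orthonormal b, onb_coe_span b, fun j => (b j).2, ?_⟩
  show ((b i0 : L) : E) = u
  rw [hb i0 rfl]


lemma finrank_span_orthonormal {n : ℕ} {c : Fin n → E} (hc : Orthonormal ℝ c) :
    finrank ℝ (span ℝ (Set.range c)) = n := by
  rw [finrank_span_eq_card hc.linearIndependent, Fintype.card_fin]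

lemma energy_eq (L : Submodule ℝ E) (y : E) :
    ‖(orthogonalProjection Lᗮ y : E)‖ ^ 2 = ‖y‖ ^ 2 - ‖(orthogonalProjection L y : E)‖ ^ 2 := by
  have h := norm_sq_eq_add_norm_sq_projection y L
  have h1 : ‖orthogonalProjection L y‖ = ‖(orthogonalProjection L y : E)‖ := rfl
  have h2 : ‖orthogonalProjection Lᗮ y‖ = ‖(orthogonalProjection Lᗮ y : E)‖ := rfl
  rw [h1, h2] at h
  linarith

set_option maxHeartbeats 1000000 in
/-- The key first/second order conditions at a local maximizer of the projection energy. -/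
lemma perturb_conditions {L : Submodule ℝ E} {d : ℕ} (hd : 0 < d) (hL : finrank ℝ L = d)
    {ε : ℝ} (hε : 0 < ε)
    (hmax : ∀ L'' : Submodule ℝ E, finrank ℝ L'' = d →
      (∀ y : E, ‖(orthogonalProjection L y : E) - (orthogonalProjection L'' y : E)‖ ≤ ε * ‖y‖) →
      ∑ i, ‖(orthogonalProjection L'' (x i) : E)‖ ^ 2
        ≤ ∑ i, ‖(orthogonalProjection L (x i) : E)‖ ^ 2)
    {u v : E} (huL : u ∈ L) (hu : ‖u‖ = 1) (hvL : v ∈ Lᗮ) (hv : ‖v‖ = 1) :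
    pcaQ x v ≤ pcaQ x u ∧ pcaB x u v = 0 := by
  classical
  set i0 : Fin d := ⟨0, hd⟩ with hi0
  obtain ⟨e, he, hspan, heL, hei0⟩ := exists_orthonormal_span_head L hL huL hu i0
  have huv : ⟪u, v⟫ = 0 := inner_right_of_mem_orthogonal huL hvL
  -- the master inequality from local maximality
  have step : ∀ t : ℝ, |t| ≤ 1/2 → 4 * |t| ≤ ε →
      2 * Real.sqrt (1 - t^2) * t * pcaB x u v + t^2 * (pcaQ x v - pcaQ x u) ≤ 0 := by
    intro t ht htε
    set s : ℝ := Real.sqrt (1 - t^2) with hsdef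
    have ht1 : t^2 ≤ 1/4 := by
      have := sq_abs t
      nlinarith [abs_nonneg t]
    have hs0 : 0 ≤ s := Real.sqrt_nonneg _
    have hss : s^2 = 1 - t^2 := Real.sq_sqrt (by nlinarith)
    have hs1 : s ≤ 1 := by nlinarith
    set w : E := s • u + t • v with hwdef
    have hw2 : ‖w‖^2 = 1 := by
      rw [hwdef, norm_add_sq_real, norm_smul, norm_smul, real_inner_smul_left,
        real_inner_smul_right, huv, hu, hv]
      simp only [Real.norm_eq_abs, mul_one, mul_zero]
      rw [sq_abs, sq_abs]
      nlinarith
    have hwnorm : ‖w‖ = 1 := by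
      have h := Real.sqrt_sq (norm_nonneg w)
      rw [hw2, Real.sqrt_one] at h
      exact h.symm
    -- ⟪w, e j⟫ = 0 for j ≠ i0
    have hwe : ∀ j : Fin d, j ≠ i0 → ⟪w, e j⟫ = 0 := by
      intro j hj
      have h1 : ⟪u, e j⟫ = 0 := by
        rw [← hei0]; exact he.2 (Ne.symm hj)
      have h2 : ⟪v, e j⟫ = 0 := by
        rw [real_inner_comm]; exact inner_right_of_mem_orthogonal (heL j) hvL
      rw [hwdef, inner_add_left, real_inner_smul_left, real_inner_smul_left, h1, h2]
      ring
    set c : Fin d → E := Function.update e i0 w with hcdef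
    have hci0 : c i0 = w := Function.update_self i0 w e
    have hcj : ∀ j, j ≠ i0 → c j = e j := fun j hj => Function.update_of_ne hj w e
    have hc : Orthonormal ℝ c := by
      rw [orthonormal_iff_ite]
      intro i j
      rcases eq_or_ne i i0 with hi | hi <;> rcases eq_or_ne j i0 with hj | hj
      · subst hi; subst hj
        rw [if_pos rfl, hci0, real_inner_self_eq_norm_sq, hw2]
      · subst hi
        rw [if_neg (Ne.symm hj), hci0, hcj j hj]
        exact hwe j hj
      · subst hj
        rw [if_neg hi, hcj i hi, real_inner_comm, hci0]
        exact hwe i hi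
      · rw [hcj i hi, hcj j hj]
        exact orthonormal_iff_ite.mp he i j
    set L'' := span ℝ (Set.range c) with hL''def
    have hL''rank : finrank ℝ L'' = d := finrank_span_orthonormal hc
    -- projection difference formula
    have hprojdiff : ∀ y : E, (orthogonalProjection L y : E) - (orthogonalProjection L'' y : E)
        = ⟪u, y⟫ • u - ⟪w, y⟫ • w := by
      intro y
      conv_lhs => rw [← hspan]
      rw [orthProj_span_orthonormal he y, orthProj_span_orthonormal hc y,
        ← Finset.sum_sub_distrib]
      rw [Finset.sum_eq_single i0]
      · rw [hei0, hci0]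
      · intro j _ hj
        rw [hcj j hj, sub_self]
      · intro h; exact absurd (Finset.mem_univ i0) h
    -- distance estimate
    have huw : ‖u - w‖ ≤ 2 * |t| := by
      have : u - w = (1 - s) • u - t • v := by
        rw [hwdef]; module
      rw [this]
      refine (norm_sub_le _ _).trans ?_
      rw [norm_smul, norm_smul, hu, hv, Real.norm_eq_abs, Real.norm_eq_abs,
        abs_of_nonneg (by nlinarith : (0:ℝ) ≤ 1 - s)]
      have h1s : 1 - s ≤ |t| := by nlinarith [sq_abs t, abs_nonneg t]
      linarith
    have hdist : ∀ y : E, ‖(orthogonalProjection L y : E) - (orthogonalProjection L'' y : E)‖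
        ≤ ε * ‖y‖ := by
      intro y
      rw [hprojdiff y]
      have hdecomp : ⟪u, y⟫ • u - ⟪w, y⟫ • w = ⟪u, y⟫ • (u - w) + ⟪u - w, y⟫ • w := by
        rw [inner_sub_left]; module
      rw [hdecomp]
      refine (norm_add_le _ _).trans ?_
      rw [norm_smul, norm_smul, Real.norm_eq_abs, Real.norm_eq_abs, hwnorm, mul_one]
      have c1 : |⟪u, y⟫| ≤ ‖y‖ := by
        have := abs_real_inner_le_norm u y; rwa [hu, one_mul] at this
      have c2 : |⟪u - w, y⟫| ≤ 2 * |t| * ‖y‖ := by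
        refine (abs_real_inner_le_norm _ _).trans ?_
        exact mul_le_mul_of_nonneg_right huw (norm_nonneg y)
      have c3 : |⟪u, y⟫| * ‖u - w‖ ≤ ‖y‖ * (2 * |t|) :=
        mul_le_mul c1 huw (norm_nonneg _) (norm_nonneg _)
      linarith [c2, c3, mul_le_mul_of_nonneg_right htε (norm_nonneg y)]
    -- apply local maximality
    have happ := hmax L'' hL''rank hdist
    rw [← hspan] at happ
    rw [sum_normSq_proj_span x he, sum_normSq_proj_span x hc] at happ
    -- extract the i0 term
    have hsum : ∑ j, pcaQ x (c j) - ∑ j, pcaQ x (e j) = pcaQ x w - pcaQ x u := by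
      rw [← Finset.sum_sub_distrib, Finset.sum_eq_single i0]
      · rw [hci0, hei0]
      · intro j _ hj
        rw [hcj j hj, sub_self]
      · intro h; exact absurd (Finset.mem_univ i0) h
    have hqw : pcaQ x w ≤ pcaQ x u := by linarith
    rw [hwdef, pcaQ_combo, hss] at hqw
    nlinarith [hqw]
  -- conclude from the master inequality
  set t0 : ℝ := min (1/2) (ε/4) with ht0def
  have ht0pos : 0 < t0 := lt_min (by norm_num) (by linarith)
  have ht0le : t0 ≤ 1/2 := min_le_left _ _
  have ht0ε : 4 * t0 ≤ ε := by
    have := min_le_right (1/2 : ℝ) (ε/4); linarith [this]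
  have ht0a : |t0| ≤ 1/2 := by rw [abs_of_pos ht0pos]; exact ht0le
  have ht0b : 4 * |t0| ≤ ε := by rw [abs_of_pos ht0pos]; exact ht0ε
  have h1 := step t0 ht0a ht0b
  have h2 := step (-t0) (by rwa [abs_neg]) (by rwa [abs_neg])
  have e1 : (-t0 : ℝ)^2 = t0^2 := by ring
  rw [e1] at h2
  have hqvu : pcaQ x v ≤ pcaQ x u := by
    nlinarith [h1, h2, mul_pos ht0pos ht0pos]
  refine ⟨hqvu, ?_⟩
  set B := pcaB x u v with hBdef
  set C := pcaQ x u - pcaQ x v with hCdef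
  have hC0 : 0 ≤ C := by rw [hCdef]; linarith
  have habs : ∀ r : ℝ, 0 < r → r ≤ t0 → |B| ≤ r * C := by
    intro r hr hrt
    have hra : |r| ≤ 1/2 := by rw [abs_of_pos hr]; linarith
    have hrb : 4 * |r| ≤ ε := by rw [abs_of_pos hr]; linarith
    have hp := step r hra hrb
    have hn := step (-r) (by rwa [abs_neg]) (by rwa [abs_neg])
    have e2 : (-r : ℝ)^2 = r^2 := by ring
    rw [e2] at hn
    set sr := Real.sqrt (1 - r^2) with hsr
    have hr2 : r^2 ≤ 1/4 := by nlinarith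
    have hsr2 : sr^2 = 1 - r^2 := Real.sq_sqrt (by nlinarith)
    have hsr0 : 0 ≤ sr := Real.sqrt_nonneg _
    have hsrhalf : 1/2 ≤ sr := by nlinarith
    rw [abs_le]
    constructor
    · by_contra hc
      push_neg at hc
      have hBneg : B < 0 := by nlinarith [mul_nonneg hr.le hC0]
      nlinarith [hn, mul_pos hr (neg_pos.mpr hBneg), mul_pos hr hr, hC0, hr]
    · by_contra hc
      push_neg at hc
      have hBpos : 0 < B := by nlinarith [mul_nonneg hr.le hC0]
      nlinarith [hp, mul_pos hr hBpos, mul_pos hr hr, hC0, hr]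
  have hBle : ∀ η : ℝ, 0 < η → |B| ≤ η := by
    intro η hη
    have hCpos : 0 < C + 1 := by linarith
    set r := min t0 (η/(C+1)) with hrdef
    have hr : 0 < r := lt_min ht0pos (by positivity)
    have h := habs r hr (min_le_left _ _)
    have hrle : r ≤ η/(C+1) := min_le_right _ _
    have h2' : r * C ≤ (η/(C+1)) * C := mul_le_mul_of_nonneg_right hrle hC0
    have hfin : (η/(C+1)) * C ≤ η := by
      rw [div_mul_eq_mul_div, div_le_iff₀ hCpos]; nlinarith
    exact le_trans h (le_trans h2' hfin)
  have hB0 : |B| ≤ 0 := by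
    by_contra hc
    push_neg at hc
    have := hBle (|B|/2) (by linarith)
    linarith
  exact abs_eq_zero.mp (le_antisymm hB0 (abs_nonneg _))


set_option maxHeartbeats 1000000 in
lemma pca_main {L : Submodule ℝ E} {d : ℕ} (hL : finrank ℝ L = d) {ε : ℝ} (hε : 0 < ε)
    (hmax : ∀ L'' : Submodule ℝ E, finrank ℝ L'' = d →
      (∀ y : E, ‖(orthogonalProjection L y : E) - (orthogonalProjection L'' y : E)‖ ≤ ε * ‖y‖) →
      ∑ i, ‖(orthogonalProjection L'' (x i) : E)‖^2 ≤ ∑ i, ‖(orthogonalProjection L (x i) : E)‖^2)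
    (L' : Submodule ℝ E) (hL' : finrank ℝ L' = d) :
    ∑ i, ‖(orthogonalProjection L' (x i) : E)‖^2
      ≤ ∑ i, ‖(orthogonalProjection L (x i) : E)‖^2 := by
  classical
  rcases Nat.eq_zero_or_pos d with hd0 | hd
  · subst hd0
    have h1 : L = ⊥ := Submodule.finrank_eq_zero.mp hL
    have h2 : L' = ⊥ := Submodule.finrank_eq_zero.mp hL'
    rw [h1] at *
    rw [h2]
  have key : ∀ u v : E, u ∈ L → ‖u‖ = 1 → v ∈ Lᗮ → ‖v‖ = 1 →
      pcaQ x v ≤ pcaQ x u ∧ pcaB x u v = 0 := fun u v huL hu hvL hv =>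
    perturb_conditions x hd hL hε hmax huL hu hvL hv
  -- a minimizer of `pcaQ` on the unit sphere of `L`
  have hLne : L ≠ ⊥ := by
    intro h
    rw [h, finrank_bot] at hL
    omega
  obtain ⟨u1, hu1L, hu1ne⟩ := Submodule.exists_mem_ne_zero_of_ne_bot hLne
  set S : Set E := (L : Set E) ∩ Metric.sphere 0 1 with hSdef
  have hSne : S.Nonempty := by
    refine ⟨‖u1‖⁻¹ • u1, Submodule.smul_mem _ _ hu1L, ?_⟩
    rw [mem_sphere_zero_iff_norm]
    exact norm_smul_inv_norm hu1ne
  have hScmp : IsCompact S :=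
    (isCompact_sphere (0 : E) 1).inter_left L.closed_of_finiteDimensional
  have hqcont : Continuous (pcaQ x) := by
    refine continuous_finset_sum _ fun i _ => ?_
    exact (continuous_const.inner continuous_id).pow 2
  obtain ⟨u0, hu0S, hu0min⟩ := hScmp.exists_isMinOn hSne hqcont.continuousOn
  obtain ⟨hu0L, hu0sph⟩ := hu0S
  have hu0n : ‖u0‖ = 1 := mem_sphere_zero_iff_norm.mp hu0sph
  set lam : ℝ := pcaQ x u0 with hlamdef
  have hlam_low : ∀ u ∈ L, lam * ‖u‖^2 ≤ pcaQ x u := by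
    intro u huL
    rcases eq_or_ne u 0 with rfl | hne
    · simp [pcaQ]
    · have hn0 : (0:ℝ) < ‖u‖ := norm_pos_iff.mpr hne
      have h1 : (0:ℝ) < ‖u‖^2 := by positivity
      have hmem : ‖u‖⁻¹ • u ∈ S := by
        refine ⟨Submodule.smul_mem _ _ huL, ?_⟩
        rw [mem_sphere_zero_iff_norm]
        exact norm_smul_inv_norm hne
      have h2 : pcaQ x u0 ≤ pcaQ x (‖u‖⁻¹ • u) := hu0min hmem
      rw [pcaQ_smul] at h2
      have h3 := mul_le_mul_of_nonneg_right h2 h1.le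
      calc lam * ‖u‖^2 ≤ (‖u‖⁻¹)^2 * pcaQ x u * ‖u‖^2 := h3
        _ = pcaQ x u := by
            field_simp
  have hlam_hi : ∀ v ∈ Lᗮ, pcaQ x v ≤ lam * ‖v‖^2 := by
    intro v hvL
    rcases eq_or_ne v 0 with rfl | hne
    · simp [pcaQ]
    · have hn0 : (0:ℝ) < ‖v‖ := norm_pos_iff.mpr hne
      have h1 : (0:ℝ) < ‖v‖^2 := by positivity
      have hvs : ‖v‖⁻¹ • v ∈ Lᗮ := Submodule.smul_mem _ _ hvL
      have hvn : ‖(‖v‖⁻¹ • v)‖ = 1 := norm_smul_inv_norm hne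
      have h2 := (key u0 (‖v‖⁻¹ • v) hu0L hu0n hvs hvn).1
      rw [pcaQ_smul] at h2
      have h3 := mul_le_mul_of_nonneg_right h2 h1.le
      calc pcaQ x v = (‖v‖⁻¹)^2 * pcaQ x v * ‖v‖^2 := by field_simp
        _ ≤ lam * ‖v‖^2 := h3
  have hB0 : ∀ u ∈ L, ∀ v ∈ Lᗮ, pcaB x u v = 0 := by
    intro u huL v hvL
    rcases eq_or_ne u 0 with rfl | hneu
    · simp [pcaB]
    rcases eq_or_ne v 0 with rfl | hnev
    · simp [pcaB]
    have hus : ‖u‖⁻¹ • u ∈ L := Submodule.smul_mem _ _ huL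
    have hun : ‖(‖u‖⁻¹ • u)‖ = 1 := norm_smul_inv_norm hneu
    have hvs : ‖v‖⁻¹ • v ∈ Lᗮ := Submodule.smul_mem _ _ hvL
    have hvn : ‖(‖v‖⁻¹ • v)‖ = 1 := norm_smul_inv_norm hnev
    have h2 := (key _ _ hus hun hvs hvn).2
    rw [pcaB_smul] at h2
    have h1 : ‖u‖⁻¹ ≠ 0 := inv_ne_zero (norm_ne_zero_iff.mpr hneu)
    have h2' : ‖v‖⁻¹ ≠ 0 := inv_ne_zero (norm_ne_zero_iff.mpr hnev)
    rcases mul_eq_zero.mp h2 with h | h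
    · rcases mul_eq_zero.mp h with h' | h'
      · exact absurd h' h1
      · exact absurd h' h2'
    · exact h
  -- final computation
  obtain ⟨e, he, hespan, heL⟩ := exists_orthonormal_span L hL
  obtain ⟨g, hg, hgspan, hgL⟩ := exists_orthonormal_span L' hL'
  conv_lhs => rw [← hgspan]
  conv_rhs => rw [← hespan]
  rw [sum_normSq_proj_span x he, sum_normSq_proj_span x hg]
  -- goal : ∑ j, pcaQ x (g j) ≤ ∑ j, pcaQ x (e j)
  have hGnn : ∀ y : E,
      0 ≤ pcaQ x ((orthogonalProjection L y : E)) - lam * ‖(orthogonalProjection L y : E)‖^2 := by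
    intro y
    have := hlam_low ((orthogonalProjection L y : E)) (orthogonalProjection L y).2
    linarith
  -- step A : pointwise bound
  have hstepA : ∀ j : Fin d, pcaQ x (g j) ≤
      (pcaQ x ((orthogonalProjection L (g j) : E))
        - lam * ‖(orthogonalProjection L (g j) : E)‖^2) + lam := by
    intro j
    have haL : (orthogonalProjection L (g j) : E) ∈ L := (orthogonalProjection L (g j)).2
    have hbL : g j - (orthogonalProjection L (g j) : E) ∈ Lᗮ :=
      sub_starProjection_mem_orthogonal (K := L) (g j)
    have hab : (orthogonalProjection L (g j) : E)
        + (g j - (orthogonalProjection L (g j) : E)) = g j := by abel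
    have hcross : pcaB x ((orthogonalProjection L (g j) : E))
        (g j - (orthogonalProjection L (g j) : E)) = 0 := hB0 _ haL _ hbL
    have hqsplit : pcaQ x (g j) = pcaQ x ((orthogonalProjection L (g j) : E))
        + pcaQ x (g j - (orthogonalProjection L (g j) : E)) := by
      conv_lhs => rw [← hab]
      rw [pcaQ_add, hcross]; ring
    have hinner : ⟪((orthogonalProjection L (g j) : E)),
        g j - (orthogonalProjection L (g j) : E)⟫ = 0 :=
      inner_right_of_mem_orthogonal haL hbL
    have hpyth := norm_add_sq_real ((orthogonalProjection L (g j) : E))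
      (g j - (orthogonalProjection L (g j) : E))
    rw [hinner, hab, hg.1 j] at hpyth
    have hbn : ‖g j - (orthogonalProjection L (g j) : E)‖^2
        = 1 - ‖(orthogonalProjection L (g j) : E)‖^2 := by
      rw [one_pow] at hpyth; linarith
    have hqb := hlam_hi _ hbL
    rw [hbn, mul_sub, mul_one] at hqb
    linarith
  -- step B : extend to a full orthonormal basis and compare sums
  obtain ⟨U, b, hsub, hb⟩ :=
    ((orthonormal_subtype_range
      hg.linearIndependent.injective).mpr hg).exists_orthonormalBasis_extension
  have hginj : Function.Injective g := hg.linearIndependent.injective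
  have himg : Finset.image g Finset.univ ⊆ U := by
    intro y hy
    obtain ⟨j, _, rfl⟩ := Finset.mem_image.mp hy
    exact hsub ⟨j, rfl⟩
  have hsumB : ∑ j, (pcaQ x ((orthogonalProjection L (g j) : E))
        - lam * ‖(orthogonalProjection L (g j) : E)‖^2)
      ≤ ∑ y ∈ U, (pcaQ x ((orthogonalProjection L y : E))
        - lam * ‖(orthogonalProjection L y : E)‖^2) := by
    have him : ∑ y ∈ Finset.image g Finset.univ,
        (pcaQ x ((orthogonalProjection L y : E)) - lam * ‖(orthogonalProjection L y : E)‖^2)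
        = ∑ j : Fin d, (pcaQ x ((orthogonalProjection L (g j) : E))
          - lam * ‖(orthogonalProjection L (g j) : E)‖^2) :=
      Finset.sum_image (fun a _ c _ h => hginj h)
    rw [← him]
    exact Finset.sum_le_sum_of_subset_of_nonneg himg fun y _ _ => hGnn y
  -- step C : the full-basis sum is a "trace" computation
  have hcoe : ∀ m : U, (m : E) = b m := fun m => by rw [hb]
  have hPq : ∀ y : E, pcaQ x ((orthogonalProjection L y : E))
      = ∑ i, ⟪(orthogonalProjection L (x i) : E), y⟫^2 := by
    intro y
    simp only [pcaQ]
    refine Finset.sum_congr rfl fun i _ => ?_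
    exact congrArg (· ^ 2) ((real_inner_comm _ _).trans
      ((inner_starProjection_left_eq_right L y (x i)).trans (real_inner_comm _ _)))
  have hPsq : ∀ y : E, ‖(orthogonalProjection L y : E)‖^2 = ∑ k, ⟪e k, y⟫^2 := by
    intro y
    conv_lhs => rw [← hespan]
    exact normSq_proj_span he y
  have hC1 : ∑ y ∈ U, pcaQ x ((orthogonalProjection L y : E)) = ∑ k, pcaQ x (e k) := by
    rw [← Finset.sum_coe_sort U]
    calc ∑ m : U, pcaQ x ((orthogonalProjection L (m : E) : E))
        = ∑ m : U, ∑ i, ⟪(orthogonalProjection L (x i) : E), b m⟫^2 := by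
          refine Finset.sum_congr rfl fun m _ => ?_
          rw [hPq, hcoe m]
      _ = ∑ i, ∑ m : U, ⟪(orthogonalProjection L (x i) : E), b m⟫^2 := Finset.sum_comm
      _ = ∑ i, ‖(orthogonalProjection L (x i) : E)‖^2 := by
          refine Finset.sum_congr rfl fun i _ => ?_
          exact parseval b _
      _ = ∑ k, pcaQ x (e k) := by
          conv_lhs => rw [← hespan]
          exact sum_normSq_proj_span x he
  have hC2 : ∑ y ∈ U, ‖(orthogonalProjection L y : E)‖^2 = (d : ℝ) := by
    rw [← Finset.sum_coe_sort U]
    calc ∑ m : U, ‖(orthogonalProjection L (m : E) : E)‖^2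
        = ∑ m : U, ∑ k, ⟪e k, b m⟫^2 := by
          refine Finset.sum_congr rfl fun m _ => ?_
          rw [hPsq, hcoe m]
      _ = ∑ k, ∑ m : U, ⟪e k, b m⟫^2 := Finset.sum_comm
      _ = ∑ k, ‖e k‖^2 := by
          refine Finset.sum_congr rfl fun k _ => ?_
          exact parseval b _
      _ = (d : ℝ) := by
          simp [he.1]
  have hsumU : ∑ y ∈ U, (pcaQ x ((orthogonalProjection L y : E))
      - lam * ‖(orthogonalProjection L y : E)‖^2)
      = (∑ k, pcaQ x (e k)) - lam * d := by
    rw [Finset.sum_sub_distrib, hC1, ← Finset.mul_sum, hC2]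
  -- put the pieces together
  have hfinal : ∑ j, pcaQ x (g j)
      ≤ ∑ j, ((pcaQ x ((orthogonalProjection L (g j) : E))
        - lam * ‖(orthogonalProjection L (g j) : E)‖^2) + lam) :=
    Finset.sum_le_sum fun j _ => hstepA j
  rw [Finset.sum_add_distrib, Finset.sum_const, Finset.card_univ, Fintype.card_fin,
    nsmul_eq_mul] at hfinal
  calc ∑ j, pcaQ x (g j)
      ≤ ∑ j, (pcaQ x ((orthogonalProjection L (g j) : E))
        - lam * ‖(orthogonalProjection L (g j) : E)‖^2) + d * lam := hfinal
    _ ≤ ((∑ k, pcaQ x (e k)) - lam * d) + d * lam := by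
        rw [← hsumU]; linarith [hsumB]
    _ = ∑ k, pcaQ x (e k) := by ring

end PCAAux

/-- The orthogonal projection onto a subspace `L` of `ℝ^D`, as a continuous linear map
`ℝ^D → ℝ^D` (the projection matrix `P_L`). -/
noncomputable def projCLM {D : ℕ} (L : Submodule ℝ (EuclideanSpace ℝ (Fin D))) :
    EuclideanSpace ℝ (Fin D) →L[ℝ] EuclideanSpace ℝ (Fin D) :=
  L.subtypeL.comp (Submodule.orthogonalProjectionOnto L)

/-- No spurious local minimizers for the PCA energy. Let
`x 1, …, x N ∈ ℝ^D` and consider `f(L) = ∑ ‖Q_L (x i)‖²` on the set of `d`-dimensional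
subspaces of `ℝ^D`, metrized by `dist(L, L') = ‖P_L − P_{L'}‖` (operator norm of the
difference of the orthogonal projections). Then every local minimizer of `f` is a global
minimizer: if a `d`-dimensional subspace `L` satisfies `f L ≤ f L'` for all `d`-dimensional
`L'` in some neighborhood of `L`, then `f L ≤ f L'` for all `d`-dimensional `L'`. -/
theorem pca_no_spurious_local_minima (D d N : ℕ)
    (x : Fin N → EuclideanSpace ℝ (Fin D))
    (f : Submodule ℝ (EuclideanSpace ℝ (Fin D)) → ℝ)
    (hf : ∀ L : Submodule ℝ (EuclideanSpace ℝ (Fin D)),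
      f L = ∑ i, ‖(Submodule.orthogonalProjectionOnto Lᗮ (x i) : EuclideanSpace ℝ (Fin D))‖ ^ 2)
    (L : Submodule ℝ (EuclideanSpace ℝ (Fin D))) (hL : Module.finrank ℝ L = d)
    (hloc : ∃ ε > (0 : ℝ), ∀ L' : Submodule ℝ (EuclideanSpace ℝ (Fin D)),
      Module.finrank ℝ L' = d → ‖projCLM L - projCLM L'‖ < ε → f L ≤ f L') :
    ∀ L' : Submodule ℝ (EuclideanSpace ℝ (Fin D)),
      Module.finrank ℝ L' = d → f L ≤ f L' := by
  intro L' hL'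
  obtain ⟨ε, hε, hmin⟩ := hloc
  have hE : ∀ M : Submodule ℝ (EuclideanSpace ℝ (Fin D)),
      f M = ∑ i, ‖x i‖^2
        - ∑ i, ‖(orthogonalProjection M (x i) : EuclideanSpace ℝ (Fin D))‖^2 := by
    intro M
    rw [hf M, ← Finset.sum_sub_distrib]
    exact Finset.sum_congr rfl fun i _ => energy_eq M (x i)
  have hmax : ∀ L'' : Submodule ℝ (EuclideanSpace ℝ (Fin D)), Module.finrank ℝ L'' = d →
      (∀ y, ‖(orthogonalProjection L y : EuclideanSpace ℝ (Fin D))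
          - (orthogonalProjection L'' y : EuclideanSpace ℝ (Fin D))‖ ≤ (ε/2) * ‖y‖) →
      ∑ i, ‖(orthogonalProjection L'' (x i) : EuclideanSpace ℝ (Fin D))‖^2
        ≤ ∑ i, ‖(orthogonalProjection L (x i) : EuclideanSpace ℝ (Fin D))‖^2 := by
    intro L'' h1 h2
    have hop : ‖projCLM L - projCLM L''‖ ≤ ε/2 := by
      refine ContinuousLinearMap.opNorm_le_bound _ (by linarith) fun y => ?_
      have hy : (projCLM L - projCLM L'') y
          = (orthogonalProjection L y : EuclideanSpace ℝ (Fin D))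
            - (orthogonalProjection L'' y : EuclideanSpace ℝ (Fin D)) := rfl
      rw [hy]; exact h2 y
    have h3 := hmin L'' h1 (lt_of_le_of_lt hop (by linarith))
    rw [hE L, hE L''] at h3
    linarith
  have h4 := pca_main x hL (by linarith : (0:ℝ) < ε/2) hmax L' hL'
  rw [hE L, hE L']
  linarith
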